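/- arXiv:2411.15894 — 3 statements merged into one kernel-verified Lean document; each statement's English description precedes it below -/
import Mathlib

section
/- For every real number d ≥ 0 and every constant C₁ > 0, PaCMAP's nearest-neighbor pair loss equals an affine transform of the negative-sampling (NEG) attractive log-term for the kernel q_NN: d/(d+C₁) = 1 + log( q_NN(d) / (1 + q_NN(d)) ). -/
/-- PaCMAP's NN-pair loss `d/(d+C₁)` equals an affine transform of the NEG attractive
log-term for the kernel `q_NN(d) = exp(-C₁/(d+C₁)) / (1 - exp(-C₁/(d+C₁)))`. -/
theorem pacmap_nn_loss_eq_neg_log_term (d C₁ : ℝ) (hd : 0 ≤ d) (hC : 0 < C₁) :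
    d / (d + C₁) =
      1 + Real.log
        ((Real.exp (-C₁ / (d + C₁)) / (1 - Real.exp (-C₁ / (d + C₁)))) /
          (1 + Real.exp (-C₁ / (d + C₁)) / (1 - Real.exp (-C₁ / (d + C₁))))) := by
  have hden : 0 < d + C₁ := by linarith
  have hneg : -C₁ / (d + C₁) < 0 := div_neg_of_neg_of_pos (by linarith) hden
  set e := Real.exp (-C₁ / (d + C₁)) with he
  have he1 : e < 1 := Real.exp_lt_one_iff.mpr hneg
  have hne : 1 - e ≠ 0 := by linarith
  have hsimp : (e / (1 - e)) / (1 + e / (1 - e)) = e := by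
    field_simp
    ring
  rw [hsimp, he, Real.log_exp]
  field_simp
  ring
end

section
/- For every real number d ≥ 0 and every constant C₂ > 0, PaCMAP's further-pair loss equals an affine transform of the negative-sampling (NEG) repulsive log-term for the kernel q_FP: 1/(d+C₂) = (1/C₂) · ( 1 - log( 1 / (1 + q_FP(d)) ) ). -/
/-- PaCMAP's FP-pair loss `1/(d+C₂)` equals an affine transform of the NEG repulsive
log-term for the kernel `q_FP(d) = (1 - exp(d/(d+C₂))) / exp(d/(d+C₂))`. -/
theorem pacmap_fp_loss_eq_neg_log_term (d C₂ : ℝ) (hd : 0 ≤ d) (hC : 0 < C₂) :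
    1 / (d + C₂) =
      (1 / C₂) * (1 - Real.log
        (1 / (1 + (1 - Real.exp (d / (d + C₂))) / Real.exp (d / (d + C₂))))) := by
  have he : Real.exp (d / (d + C₂)) ≠ 0 := (Real.exp_pos _).ne'
  have h1 : 1 + (1 - Real.exp (d / (d + C₂))) / Real.exp (d / (d + C₂))
      = 1 / Real.exp (d / (d + C₂)) := by field_simp; ring
  rw [h1, one_div_one_div, Real.log_exp]
  have hdc : d + C₂ ≠ 0 := by positivity
  field_simp
  ring
end

section
/- Let N, m be positive natural numbers, let d : Fin N → ℝ and e : Fin (m·N) → ℝ be families of nonnegative reals (the NN and FP pair values). Then the total PaCMAP loss equals the corresponding sum of NEG log-terms up to an additive constant: Σ_{i} d(i)/(d(i)+10) + Σ_{j} 1/(e(j)+1) = N + m·N + Σ_{i} log( q_NN(d(i)) / (1 + q_NN(d(i))) ) − Σ_{j} log( 1 / (1 + q_FP(e(j))) ), where q_NN and q_FP are taken with C₁ = 10 and C₂ = 1. -/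
/-- PaCMAP NN kernel with `C₁ = 10`. -/
noncomputable def qNN (d : ℝ) : ℝ :=
  Real.exp (-10 / (d + 10)) / (1 - Real.exp (-10 / (d + 10)))

/-- PaCMAP FP kernel with `C₂ = 1`. -/
noncomputable def qFP (d : ℝ) : ℝ :=
  (1 - Real.exp (d / (d + 1))) / Real.exp (d / (d + 1))

lemma log_nn (d : ℝ) (hd : 0 ≤ d) :
    Real.log (qNN d / (1 + qNN d)) = d / (d + 10) - 1 := by
  have hden : (0:ℝ) < d + 10 := by linarith
  have hx1 : Real.exp (-10 / (d + 10)) < 1 := by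
    rw [Real.exp_lt_one_iff]
    exact div_neg_of_neg_of_pos (by norm_num) hden
  have hx0 : 0 < Real.exp (-10 / (d + 10)) := Real.exp_pos _
  set x := Real.exp (-10 / (d + 10)) with hxdef
  have h1x : 0 < 1 - x := by linarith
  have hq : qNN d / (1 + qNN d) = x := by
    rw [qNN, ← hxdef]
    field_simp
    ring
  rw [hq, hxdef, Real.log_exp]
  field_simp
  ring

lemma log_fp (e : ℝ) (he : 0 ≤ e) :
    Real.log (1 / (1 + qFP e)) = 1 - 1 / (e + 1) := by
  have hden : (0:ℝ) < e + 1 := by linarith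
  have hy : 0 < Real.exp (e / (e + 1)) := Real.exp_pos _
  have hq : 1 / (1 + qFP e) = Real.exp (e / (e + 1)) := by
    rw [qFP]
    field_simp
    ring
  rw [hq, Real.log_exp]
  field_simp
  ring

/-- The total PaCMAP loss (with `C₁ = 10`, `C₂ = 1`, `N` NN pairs and `m·N` FP pairs)
equals the corresponding sum of NEG log-terms up to an additive constant. -/
theorem pacmap_loss_eq_neg_loss (N m : ℕ) (hN : 0 < N) (hm : 0 < m)
    (d : Fin N → ℝ) (e : Fin (m * N) → ℝ)
    (hd : ∀ i, 0 ≤ d i) (he : ∀ j, 0 ≤ e j) :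
    (∑ i, d i / (d i + 10)) + (∑ j, 1 / (e j + 1)) =
      (N : ℝ) + (m * N : ℝ)
        + (∑ i, Real.log (qNN (d i) / (1 + qNN (d i))))
        - (∑ j, Real.log (1 / (1 + qFP (e j)))) := by
  have h1 : (∑ i, Real.log (qNN (d i) / (1 + qNN (d i)))) =
      (∑ i, d i / (d i + 10)) - N := by
    rw [Finset.sum_congr rfl (fun i _ => log_nn (d i) (hd i)),
      Finset.sum_sub_distrib]
    simp
  have h2 : (∑ j, Real.log (1 / (1 + qFP (e j)))) =
      (m * N : ℝ) - (∑ j, 1 / (e j + 1)) := by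
    rw [Finset.sum_congr rfl (fun j _ => log_fp (e j) (he j)),
      Finset.sum_sub_distrib]
    simp
  rw [h1, h2]
  ring
end
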